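/- For any vectors a_u ∈ ℝˡ, a_a ∈ ℝᵐ, v ∈ ℝⁿ and u ∈ ℝᵐ, if D (B_c a_u + B a_a) + v = B u, then (Bᵀ A D B) a_a + Bᵀ A v = u. (Elimination of the unactuated accelerations from the Euler–Lagrange equations of an underactuated system.) -/

import Mathlib

open Matrix

lemma d11_posdef {l m : ℕ}
    (Bc : Matrix (Fin (l + m)) (Fin l) ℝ)
    (D : Matrix (Fin (l + m)) (Fin (l + m)) ℝ)
    (hBc : Bcᵀ * Bc = 1) (hD : D.PosDef) :
    (Bcᵀ * D * Bc).PosDef := by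
  refine posDef_iff_dotProduct_mulVec.mpr ⟨?_, ?_⟩
  · show (Bcᵀ * D * Bc)ᴴ = _
    rw [conjTranspose_mul, conjTranspose_mul, hD.1.eq]
    simp [Matrix.mul_assoc]
  · intro x hx
    have hBcx : Bc *ᵥ x ≠ 0 := by
      intro h
      apply hx
      have : Bcᵀ *ᵥ (Bc *ᵥ x) = x := by
        rw [mulVec_mulVec, hBc, one_mulVec]
      rw [h, mulVec_zero] at this
      exact this.symm
    have := hD.dotProduct_mulVec_pos (x := Bc *ᵥ x) (by simpa using hBcx)
    simpa [star_trivial, ← mulVec_mulVec, dotProduct_mulVec, vecMul_transpose,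
      Matrix.mul_assoc] using this

/-- Elimination of the unactuated accelerations from the Euler–Lagrange
equations of an underactuated system: if `D (B_c a_u + B a_a) + v = B u`, then
`(Bᵀ A D B) a_a + Bᵀ A v = u`. -/
theorem stmt_1 {l m : ℕ} (hl : 1 ≤ l) (hm : 1 ≤ m)
    (Bc : Matrix (Fin (l + m)) (Fin l) ℝ) (B : Matrix (Fin (l + m)) (Fin m) ℝ)
    (D : Matrix (Fin (l + m)) (Fin (l + m)) ℝ)
    (hBc : Bcᵀ * Bc = 1) (hB : Bᵀ * B = 1) (hBcB : Bcᵀ * B = 0)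
    (hsum : Bc * Bcᵀ + B * Bᵀ = 1)
    (hD : D.PosDef)
    (A : Matrix (Fin (l + m)) (Fin (l + m)) ℝ)
    (hA : A = 1 - D * Bc * (Bcᵀ * D * Bc)⁻¹ * Bcᵀ)
    (a_u : Fin l → ℝ) (a_a : Fin m → ℝ) (v : Fin (l + m) → ℝ) (u : Fin m → ℝ)
    (heom : D *ᵥ (Bc *ᵥ a_u + B *ᵥ a_a) + v = B *ᵥ u) :
    (Bᵀ * A * D * B) *ᵥ a_a + (Bᵀ * A) *ᵥ v = u := by
  have hP := d11_posdef Bc D hBc hD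
  have hinv : (Bcᵀ * D * Bc)⁻¹ * (Bcᵀ * D * Bc) = 1 :=
    nonsing_inv_mul _ (isUnit_iff_ne_zero.mpr hP.det_pos.ne')
  have hADBc : A * (D * Bc) = 0 := by
    rw [hA, Matrix.sub_mul, Matrix.one_mul]
    have : D * Bc * (Bcᵀ * D * Bc)⁻¹ * Bcᵀ * (D * Bc)
        = D * Bc * ((Bcᵀ * D * Bc)⁻¹ * (Bcᵀ * D * Bc)) := by
      simp only [Matrix.mul_assoc]
    rw [this, hinv, Matrix.mul_one, sub_self]
  have hAB : A * B = B := by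
    rw [hA, Matrix.sub_mul, Matrix.one_mul]
    rw [Matrix.mul_assoc, hBcB, Matrix.mul_zero, sub_zero]
  have key := congrArg (fun w => (Bᵀ * A) *ᵥ w) heom
  simp only [mulVec_add, mulVec_mulVec] at key
  rw [show Bᵀ * A * (D * Bc) = 0 by rw [Matrix.mul_assoc, hADBc, Matrix.mul_zero]] at key
  rw [show Bᵀ * A * B = 1 by rw [Matrix.mul_assoc, hAB, hB]] at key
  simpa [Matrix.mul_assoc] using key
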